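/- Let λ, μ ∈ ℝ with μ > 0 and λ + 2μ > 0, let t₁, t₂, t₃ ∈ ℝ, and set t′ᵢ = (λ + tᵢ)/(λ + 2μ). Let C be the isotropic elasticity tensor with Lamé parameters λ, μ and let T be the translator operator on Sym₃ associated with t = diag(t₁,t₂,t₃), i.e. T:ε = (tr ε)·t + (t:ε)·E + (tr t)·(ε − (tr ε)E) − (ε·t + t·ε). Then the quadratic form ε ↦ ε:((C − T):ε) is nonnegative on Sym₃ if and only if |t′ᵢ| ≤ 1 for i = 1, 2, 3 and 2t′₁t′₂t′₃ − (t′₁² + t′₂² + t′₃²) + 1 ≥ 0. -/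

import Mathlib

open Matrix

noncomputable section

/-- 3×3 real matrices; symmetric ones model Sym₃. -/
abbrev Mat := Matrix (Fin 3) (Fin 3) ℝ

/-- Inner product on matrices: a:b = tr(ab). -/
def inn (a b : Mat) : ℝ := (a * b).trace

/-- Isotropic elasticity tensor with Lamé parameters l, m: ε ↦ l(tr ε)E + 2mε. -/
def isoC (l m : ℝ) (e : Mat) : Mat := (l * e.trace) • (1 : Mat) + (2*m) • e

/-- The interface operator K(n) for material parameters (μ, ν):
K(n):q = (1/(2μ))(qₙ⊗n + n⊗qₙ − (qₙₙ/(1−ν)) n⊗n). -/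
def Kop (μ ν : ℝ) (n : Fin 3 → ℝ) (q : Mat) : Mat :=
  (1/(2*μ)) • (vecMulVec (q.mulVec n) n + vecMulVec n (q.mulVec n)
    - ((n ⬝ᵥ q.mulVec n)/(1-ν)) • vecMulVec n n)


/-- The translator operator T(t):ε = (tr ε)t + (t:ε)E + (tr t)(ε − (tr ε)E) − (ε·t + t·ε). -/
def translOp (t e : Mat) : Mat :=
  e.trace • t + (inn t e) • (1:Mat) + t.trace • (e - e.trace • (1:Mat)) - (e * t + t * e)

lemma real3 (a b c : ℝ) :
    (∀ x y z : ℝ, 0 ≤ x^2+y^2+z^2+2*c*x*y+2*b*x*z+2*a*y*z) ↔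
    (|a| ≤ 1 ∧ |b| ≤ 1 ∧ |c| ≤ 1 ∧ 0 ≤ 2*a*b*c - (a^2+b^2+c^2) + 1) := by
  constructor
  · intro H
    have ha : |a| ≤ 1 := abs_le.2 ⟨by nlinarith [H 0 1 1], by nlinarith [H 0 1 (-1)]⟩
    have hb : |b| ≤ 1 := abs_le.2 ⟨by nlinarith [H 1 0 1], by nlinarith [H 1 0 (-1)]⟩
    have hc : |c| ≤ 1 := abs_le.2 ⟨by nlinarith [H 1 1 0], by nlinarith [H 1 (-1) 0]⟩
    refine ⟨ha, hb, hc, ?_⟩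
    have ha2 : a^2 ≤ 1 := by
      have h1 := (abs_le.1 ha).1; have h2 := (abs_le.1 ha).2; nlinarith
    rcases eq_or_lt_of_le ha2 with h | h
    · have : (a-1)*(a+1) = 0 := by nlinarith
      rcases mul_eq_zero.1 this with h1 | h1
      · have ha1 : a = 1 := by linarith
        have hbc : b = c := by nlinarith [H (b-c) 1 (-1)]
        subst ha1; subst hbc; nlinarith
      · have ha1 : a = -1 := by linarith
        have hbc : b = -c := by nlinarith [H (-(b+c)) 1 1]
        subst ha1; subst hbc; nlinarith
    · nlinarith [H (1-a^2) (a*b-c) (a*c-b)]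
  · rintro ⟨ha, hb, hc, hdet⟩ x y z
    have hb2 : b^2 ≤ 1 := by
      have h1 := (abs_le.1 hb).1; have h2 := (abs_le.1 hb).2; nlinarith
    have hc2 : c^2 ≤ 1 := by
      have h1 := (abs_le.1 hc).1; have h2 := (abs_le.1 hc).2; nlinarith
    rcases eq_or_lt_of_le hc2 with h | h
    · have h1 : (a - b*c)^2 ≤ 0 := by nlinarith
      have habc : a = b*c := by nlinarith [sq_nonneg (a - b*c)]
      subst habc
      have : (c-1)*(c+1) = 0 := by nlinarith
      rcases mul_eq_zero.1 this with h1 | h1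
      · have hc1 : c = 1 := by linarith
        subst hc1
        nlinarith [sq_nonneg (x + y + b*z), mul_nonneg (by linarith : (0:ℝ) ≤ 1 - b^2) (sq_nonneg z)]
      · have hc1 : c = -1 := by linarith
        subst hc1
        nlinarith [sq_nonneg (x - y + b*z), mul_nonneg (by linarith : (0:ℝ) ≤ 1 - b^2) (sq_nonneg z)]
    · have h1c : (0:ℝ) < 1 - c^2 := by linarith
      nlinarith [mul_nonneg h1c.le (sq_nonneg (x + c*y + b*z)),
        sq_nonneg ((1-c^2)*y + (a - b*c)*z), mul_nonneg hdet (sq_nonneg z), h1c]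

lemma quad_eval (lam μ t₁ t₂ t₃ : ℝ) (e : Mat) (hs : e.IsSymm) :
    inn e (isoC lam μ e - translOp (Matrix.diagonal ![t₁, t₂, t₃]) e)
      = (lam+2*μ)*((e 0 0)^2+(e 1 1)^2+(e 2 2)^2)
        + 2*(lam+t₃)*(e 0 0)*(e 1 1) + 2*(lam+t₂)*(e 0 0)*(e 2 2) + 2*(lam+t₁)*(e 1 1)*(e 2 2)
        + 2*(2*μ-t₃)*(e 0 1)^2 + 2*(2*μ-t₂)*(e 0 2)^2 + 2*(2*μ-t₁)*(e 1 2)^2 := by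
  have h10 : e 1 0 = e 0 1 := hs.apply 0 1
  have h20 : e 2 0 = e 0 2 := hs.apply 0 2
  have h21 : e 2 1 = e 1 2 := hs.apply 1 2
  simp only [inn, isoC, translOp, Matrix.trace, Matrix.diag, Fin.sum_univ_three,
    Matrix.mul_apply, Matrix.sub_apply, Matrix.add_apply, Matrix.smul_apply,
    Matrix.one_apply, Matrix.diagonal_apply, smul_eq_mul]
  norm_num [Fin.ext_iff, h10, h20, h21]
  have h3 : (![t₁, t₂, t₃] : Fin 3 → ℝ) 2 = t₃ := rfl
  rw [h3]
  ring

lemma symm_construct (x y z p q r : ℝ) :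
    (!![x, p, q; p, y, r; q, r, z] : Mat).IsSymm := by
  ext i j
  fin_cases i <;> fin_cases j <;> rfl

/-- the translated quadratic form ε ↦ ε:((C − T):ε) is nonnegative on Sym₃
iff |t′ᵢ| ≤ 1 for i = 1,2,3 and 2t′₁t′₂t′₃ − (t′₁² + t′₂² + t′₃²) + 1 ≥ 0, where
t′ᵢ = (λ + tᵢ)/(λ + 2μ). -/
theorem translator_convexity (lam μ : ℝ) (hμ : 0 < μ) (hlμ : 0 < lam + 2*μ)
    (t₁ t₂ t₃ : ℝ) :
    (∀ e : Mat, e.IsSymm →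
        0 ≤ inn e (isoC lam μ e - translOp (Matrix.diagonal ![t₁, t₂, t₃]) e))
    ↔ ((|(lam + t₁)/(lam + 2*μ)| ≤ 1 ∧ |(lam + t₂)/(lam + 2*μ)| ≤ 1
          ∧ |(lam + t₃)/(lam + 2*μ)| ≤ 1)
        ∧ 0 ≤ 2*((lam + t₁)/(lam + 2*μ))*((lam + t₂)/(lam + 2*μ))*((lam + t₃)/(lam + 2*μ))
              - (((lam + t₁)/(lam + 2*μ))^2 + ((lam + t₂)/(lam + 2*μ))^2
                  + ((lam + t₃)/(lam + 2*μ))^2) + 1) := by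
  set a := (lam + t₁)/(lam + 2*μ) with hA
  set b := (lam + t₂)/(lam + 2*μ) with hB
  set c := (lam + t₃)/(lam + 2*μ) with hC
  have hne : lam + 2*μ ≠ 0 := ne_of_gt hlμ
  have key : ∀ x y z : ℝ,
      (lam+2*μ) * (x^2+y^2+z^2+2*c*x*y+2*b*x*z+2*a*y*z)
        = (lam+2*μ)*(x^2+y^2+z^2) + 2*(lam+t₃)*x*y + 2*(lam+t₂)*x*z + 2*(lam+t₁)*y*z := by
    intro x y z
    rw [hA, hB, hC]
    field_simp
  constructor
  · intro H
    have Hr : ∀ x y z p q r : ℝ,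
        0 ≤ (lam+2*μ)*(x^2+y^2+z^2)
          + 2*(lam+t₃)*x*y + 2*(lam+t₂)*x*z + 2*(lam+t₁)*y*z
          + 2*(2*μ-t₃)*p^2 + 2*(2*μ-t₂)*q^2 + 2*(2*μ-t₁)*r^2 := by
      intro x y z p q r
      have h := H (!![x, p, q; p, y, r; q, r, z]) (symm_construct x y z p q r)
      rw [quad_eval lam μ t₁ t₂ t₃ _ (symm_construct x y z p q r)] at h
      simpa using h
    have hQ : ∀ x y z : ℝ, 0 ≤ x^2+y^2+z^2+2*c*x*y+2*b*x*z+2*a*y*z := by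
      intro x y z
      have h := Hr x y z 0 0 0
      have hk := key x y z
      nlinarith [hlμ]
    obtain ⟨ha, hb, hc, hdet⟩ := (real3 a b c).1 hQ
    exact ⟨⟨ha, hb, hc⟩, hdet⟩
  · rintro ⟨⟨ha, hb, hc⟩, hdet⟩ e hs
    rw [quad_eval lam μ t₁ t₂ t₃ e hs]
    have hQ := (real3 a b c).2 ⟨ha, hb, hc, hdet⟩ (e 0 0) (e 1 1) (e 2 2)
    have hD : 0 ≤ (lam+2*μ) * ((e 0 0)^2+(e 1 1)^2+(e 2 2)^2
        + 2*c*(e 0 0)*(e 1 1) + 2*b*(e 0 0)*(e 2 2) + 2*a*(e 1 1)*(e 2 2)) :=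
      mul_nonneg hlμ.le hQ
    have hk := key (e 0 0) (e 1 1) (e 2 2)
    have h1 : t₁ ≤ 2*μ := by
      have := (div_le_one hlμ).1 (abs_le.1 ha).2; linarith
    have h2 : t₂ ≤ 2*μ := by
      have := (div_le_one hlμ).1 (abs_le.1 hb).2; linarith
    have h3 : t₃ ≤ 2*μ := by
      have := (div_le_one hlμ).1 (abs_le.1 hc).2; linarith
    have s1 := mul_nonneg (by linarith : (0:ℝ) ≤ 2*(2*μ-t₃)) (sq_nonneg (e 0 1))
    have s2 := mul_nonneg (by linarith : (0:ℝ) ≤ 2*(2*μ-t₂)) (sq_nonneg (e 0 2))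
    have s3 := mul_nonneg (by linarith : (0:ℝ) ≤ 2*(2*μ-t₁)) (sq_nonneg (e 1 2))
    nlinarith [hD, hk, s1, s2, s3]
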